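/- Fix positive reals a, b. The minimum of S(x,y) = a/x + (a y)/(b x) + (b x)/(a y) + x/a over the square (x,y) ∈ (0,1]² is attained at an interior critical point (namely (x,y)=(a,b), where ∇S = 0) if and only if a ≤ 1 and b ≤ 1; when a > 1 or b > 1 the minimum over (0,1]² is attained on the boundary x = 1 or y = 1. -/

import Mathlib

lemma gb_two_le (u v : ℝ) (hu : 0 < u) (hv : 0 < v) : 2 ≤ u / v + v / u := by
  rw [div_add_div _ _ hv.ne' hu.ne', le_div_iff₀ (mul_pos hv hu)]
  nlinarith [sq_nonneg (u - v)]

lemma gb_gdec (t u : ℝ) (ht : 0 < t) (htu : t ≤ u) (hu1 : u ≤ 1) :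
    u + 1 / u ≤ t + 1 / t := by
  have hu : 0 < u := ht.trans_le htu
  rw [← sub_nonneg]
  have e : t + 1 / t - (u + 1 / u) = (u - t) * (1 - t * u) / (t * u) := by
    field_simp; ring
  rw [e]
  apply div_nonneg (mul_nonneg (by linarith) (by nlinarith)) (by positivity)

lemma gb_fdec (a x z : ℝ) (ha : 0 < a) (hx : 0 < x) (hxz : x ≤ z) (hza : x * z ≤ a ^ 2) :
    a / z + z / a ≤ a / x + x / a := by
  have hz : 0 < z := hx.trans_le hxz
  rw [← sub_nonneg]
  have e : a / x + x / a - (a / z + z / a) = (z - x) * (a ^ 2 - x * z) / (a * x * z) := by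
    field_simp; ring
  rw [e]
  apply div_nonneg (mul_nonneg (by linarith) (by linarith)) (by positivity)

lemma gb_mid (a b x' y' : ℝ) (ha : 0 < a) (hb : 0 < b) (hx' : 0 < x')
    (hy' : 0 < y') (hy1 : y' ≤ 1) (hreg : a / b ≤ x') :
    a / (b * x') + b * x' / a ≤ a * y' / (b * x') + b * x' / (a * y') := by
  have hbx : a ≤ b * x' := by
    have := (div_le_iff₀ hb).1 hreg; linarith
  have hu1 : a / (b * x') ≤ 1 := (div_le_one (by positivity)).2 hbx
  have ht : 0 < a * y' / (b * x') := by positivity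
  have htu : a * y' / (b * x') ≤ a / (b * x') := by
    have hnum : a * y' ≤ a := by nlinarith
    exact div_le_div_of_nonneg_right hnum (by positivity)
  have gkey := gb_gdec (a * y' / (b * x')) (a / (b * x')) ht htu hu1
  rw [one_div_div, one_div_div] at gkey
  linarith [gkey]

set_option maxHeartbeats 1000000 in
/-- Dichotomy for the location of the minimum of the reciprocal weighted GB inventory
`S(x,y) = a/x + ay/(bx) + bx/(ay) + x/a` on `(0,1]²`: the point `(a,b)` is a critical
point of `S`, the minimum is attained at this interior critical point iff `a ≤ 1` and
`b ≤ 1`, and otherwise the minimum is attained on the boundary `x = 1` or `y = 1`. -/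
theorem gb_min_location_dichotomy (a b : ℝ) (ha : 0 < a) (hb : 0 < b)
    (S : ℝ → ℝ → ℝ)
    (hS : ∀ x y, S x y = a / x + (a * y) / (b * x) + (b * x) / (a * y) + x / a) :
    (deriv (fun x => S x b) a = 0 ∧ deriv (fun y => S a y) b = 0) ∧
    ((a ≤ 1 ∧ b ≤ 1) ↔
      (a ≤ 1 ∧ b ≤ 1 ∧
        ∀ x y : ℝ, 0 < x → x ≤ 1 → 0 < y → y ≤ 1 → S a b ≤ S x y)) ∧
    ((1 < a ∨ 1 < b) →
      ∃ x y : ℝ, 0 < x ∧ x ≤ 1 ∧ 0 < y ∧ y ≤ 1 ∧ (x = 1 ∨ y = 1) ∧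
        ∀ x' y' : ℝ, 0 < x' → x' ≤ 1 → 0 < y' → y' ≤ 1 → S x y ≤ S x' y') := by
  refine ⟨?_, ?_, ?_⟩
  · -- Part 1: (a,b) is a critical point
    constructor
    · have hfx : (fun x => S x b) = fun x => a / x + (a * b) / (b * x) + (b * x) / (a * b) + x / a :=
        funext fun x => hS x b
      have t1 := (hasDerivAt_const a a).div (hasDerivAt_id a) ha.ne'
      have t2 := (hasDerivAt_const a (a * b)).div ((hasDerivAt_id a).const_mul b)
        (by simpa using (mul_pos hb ha).ne')
      have t3 := ((hasDerivAt_id a).const_mul b).div_const (a * b)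
      have t4 := (hasDerivAt_id a).div_const a
      have d := ((t1.add t2).add t3).add t4
      have d0 : HasDerivAt
          (fun x : ℝ => a / x + (a * b) / (b * x) + (b * x) / (a * b) + x / a) 0 a := by
        refine d.congr_deriv ?_
        simp only [id_eq]
        field_simp
        ring
      rw [hfx]
      exact d0.deriv
    · have hfy : (fun y => S a y) = fun y => a / a + (a * y) / (b * a) + (b * a) / (a * y) + a / a :=
        funext fun y => hS a y
      have t2 := ((hasDerivAt_id b).const_mul a).div_const (b * a)
      have t3 := (hasDerivAt_const b (b * a)).div ((hasDerivAt_id b).const_mul a)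
        (by simpa using (mul_pos ha hb).ne')
      have d := (((hasDerivAt_const b (a / a)).add t2).add t3).add (hasDerivAt_const b (a / a))
      have d0 : HasDerivAt
          (fun y : ℝ => a / a + (a * y) / (b * a) + (b * a) / (a * y) + a / a) 0 b := by
        refine d.congr_deriv ?_
        simp only [id_eq]
        field_simp
        ring
      rw [hfy]
      exact d0.deriv
  · -- Part 2: iff.  The global minimum over (0,1]² is `S a b = 4` whenever it lies inside.
    constructor
    · rintro ⟨ha1, hb1⟩
      refine ⟨ha1, hb1, ?_⟩
      intro x y hx hx1 hy hy1
      have hSab : S a b = 4 := by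
        rw [hS]; field_simp; ring
      rw [hSab, hS]
      have h1 := gb_two_le a x ha hx
      have h2 := gb_two_le (a * y) (b * x) (by positivity) (by positivity)
      linarith
    · rintro ⟨ha1, hb1, _⟩
      exact ⟨ha1, hb1⟩
  · -- Part 3: boundary minimizer when a > 1 or b > 1
    intro h
    by_cases hba : b ≤ a
    · -- Case C1: 1 < a, b ≤ a; minimizer (1, b/a)
      have ha1 : 1 < a := h.elim id fun hb1 => hb1.trans_le hba
      refine ⟨1, b / a, one_pos, le_refl 1, div_pos hb ha, (div_le_one ha).2 hba, Or.inl rfl, ?_⟩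
      intro x' y' hx' hx1 hy' hy1
      have e : S 1 (b / a) = a + 1 / a + 2 := by rw [hS]; field_simp; ring
      have h1 : a + 1 / a ≤ a / x' + x' / a := by
        rw [← sub_nonneg]
        have e2 : a / x' + x' / a - (a + 1 / a) = (1 - x') * (a ^ 2 - x') / (a * x') := by
          field_simp; ring
        rw [e2]
        apply div_nonneg (mul_nonneg (by linarith) (by nlinarith)) (by positivity)
      have h2 := gb_two_le (a * y') (b * x') (by positivity) (by positivity)
      rw [e, hS]; linarith
    · push_neg at hba
      have hb1 : 1 < b := h.elim (fun ha1 => ha1.trans hba) id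
      obtain ⟨s, hs0, hbs⟩ : ∃ s, 0 < s ∧ b = s ^ 2 :=
        ⟨Real.sqrt b, Real.sqrt_pos.2 hb, (Real.sq_sqrt hb.le).symm⟩
      by_cases has : a ≤ s
      · -- Case C2: a² ≤ b; minimizer (a/√b, 1)
        refine ⟨a / s, 1, div_pos ha hs0, (div_le_one hs0).2 has, one_pos, le_refl 1,
          Or.inr rfl, ?_⟩
        intro x' y' hx' hx1 hy' hy1
        have e : S (a / s) 1 = 2 * (b + 1) / s := by rw [hS, hbs]; field_simp; ring
        rw [e, hS]
        rcases le_or_gt (a / b) x' with hreg | hreg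
        · have hmid := gb_mid a b x' y' ha hb hx' hy' hy1 hreg
          have hAM : 2 * (b + 1) / s ≤ a / x' + x' / a + (a / (b * x') + b * x' / a) := by
            have hkey := gb_two_le a (s * x') ha (by positivity)
            have e3 : a / x' + x' / a + (a / (b * x') + b * x' / a)
                = (s + 1 / s) * (a / (s * x') + s * x' / a) := by
              rw [hbs]; field_simp; ring
            have e4 : 2 * (b + 1) / s = (s + 1 / s) * 2 := by
              rw [hbs]; field_simp
            rw [e3, e4]
            exact mul_le_mul_of_nonneg_left hkey (by positivity)
          linarith
        · -- region x' < a/b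
          have hf := gb_fdec a x' (a / b) ha hx' hreg.le (by
            have hab1 : a / b ≤ a := by
              rw [div_le_iff₀ hb]; nlinarith
            nlinarith)
          have e5 : a / (a / b) + a / b / a = b + 1 / b := by
            field_simp
          rw [e5] at hf
          have h2 := gb_two_le (a * y') (b * x') (by positivity) (by positivity)
          have e6 : 2 * (b + 1) / s ≤ b + 1 / b + 2 := by
            rw [← sub_nonneg, hbs]
            have e7 : s ^ 2 + 1 / s ^ 2 + 2 - 2 * (s ^ 2 + 1) / s
                = (s ^ 2 + 1) * (s - 1) ^ 2 / s ^ 2 := by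
              field_simp; ring
            rw [e7]; positivity
          linarith
      · -- Case C3: b < a²; minimizer (1,1)
        push_neg at has
        have ha1 : 1 < a := by nlinarith
        refine ⟨1, 1, one_pos, le_refl 1, one_pos, le_refl 1, Or.inl rfl, ?_⟩
        intro x' y' hx' hx1 hy' hy1
        have e : S 1 1 = a + a / b + b / a + 1 / a := by rw [hS]; field_simp
        rw [e, hS]
        rcases le_or_gt (a / b) x' with hreg | hreg
        · have hmid := gb_mid a b x' y' ha hb hx' hy' hy1 hreg
          have hh : a + a / b + b / a + 1 / a
              ≤ a / x' + x' / a + (a / (b * x') + b * x' / a) := by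
            rw [← sub_nonneg]
            have e2 : a / x' + x' / a + (a / (b * x') + b * x' / a)
                - (a + a / b + b / a + 1 / a)
                = (1 - x') * (b + 1) * (a ^ 2 - b * x') / (a * b * x') := by
              field_simp; ring
            rw [e2]
            apply div_nonneg ?_ (by positivity)
            apply mul_nonneg (mul_nonneg (by linarith) (by linarith))
            nlinarith
          linarith
        · have hf := gb_fdec a x' (a / b) ha hx' hreg.le (by
            have hab1 : a / b ≤ a := by
              rw [div_le_iff₀ hb]; nlinarith
            nlinarith)
          have e5 : a / (a / b) + a / b / a = b + 1 / b := by
            field_simp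
          rw [e5] at hf
          have h2 := gb_two_le (a * y') (b * x') (by positivity) (by positivity)
          have e6 : a + a / b + b / a + 1 / a ≤ b + 1 / b + 2 := by
            rw [← sub_nonneg]
            have e7 : b + 1 / b + 2 - (a + a / b + b / a + 1 / a)
                = (b - a) * (a - 1) * (b + 1) / (a * b) := by
              field_simp; ring
            rw [e7]
            apply div_nonneg ?_ (by positivity)
            apply mul_nonneg (mul_nonneg (by linarith) (by linarith)) (by linarith)
          linarith
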